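/- Let H be a strongly-algebraic r-uniform hypergraph of complexity (n,d) over a field F. Then for every s > (r−1)·C(n+d,d), there do not exist s pairwise disjoint edges f_i = {u_{i,1},…,u_{i,r}} (i ∈ [s]) of H such that for every r-tuple (i_1,…,i_r) ∈ [s]^r with i_1,…,i_r pairwise distinct, the set {u_{i_1,1},…,u_{i_r,r}} is not an edge of H. -/

import Mathlib

open Finset Submodule


def coreExt {J ι : Type} [DecidableEq J] (m : J) (k' : {j : J // j ≠ m})
    (v' : {j : J // j ≠ m} → ι) (j : J) : ι :=
  if h : j = m then v' k' else v' ⟨j, h⟩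

lemma coreExt_self {J ι : Type} [DecidableEq J] (m : J) (k' : {j : J // j ≠ m})
    (v' : {j : J // j ≠ m} → ι) : coreExt m k' v' m = v' k' := dif_pos rfl

lemma coreExt_ne {J ι : Type} [DecidableEq J] (m : J) (k' : {j : J // j ≠ m})
    (v' : {j : J // j ≠ m} → ι) (j : J) (h : j ≠ m) : coreExt m k' v' j = v' ⟨j, h⟩ := dif_neg h

lemma core (F : Type) [Field F] :
    ∀ (r : ℕ) (ι J : Type) [DecidableEq ι] [DecidableEq J] [Fintype J],
      Fintype.card J = r + 1 → ∀ (N : ℕ) (A : Finset ι) (T : (J → ι) → F) (k : J),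
      (∀ a ∈ A, T (fun _ => a) ≠ 0) →
      (∀ v : J → ι, (∀ j, v j ∈ A) → Function.Injective v → T v = 0) →
      (∀ j : J, j ≠ k → ∃ W : Finset ((J → ι) → F), W.card ≤ N ∧
         ∀ a ∈ A, (fun v => T (Function.update v j a)) ∈
           Submodule.span F (W : Set ((J → ι) → F))) →
      A.card ≤ r * N := by
  intro r
  induction r with
  | zero =>
    intro ι J _ _ _ hJ N A T k hdiag hvanish _
    have hsub : Subsingleton J := by
      rw [← Fintype.card_le_one_iff_subsingleton, hJ]
    simp only [Nat.zero_mul, Nat.le_zero, Finset.card_eq_zero]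
    rw [Finset.eq_empty_iff_forall_notMem]
    intro a ha
    exact hdiag a ha (hvanish _ (fun _ => ha) (Function.injective_of_subsingleton _))
  | succ r IH =>
    intro ι J _ _ _ hJ N A T k hdiag hvanish hspan
    classical
    rcases A.eq_empty_or_nonempty with rfl | ⟨a₀, ha₀⟩
    · simp
    obtain ⟨m, hm⟩ : ∃ m : J, m ≠ k := Fintype.exists_ne_of_one_lt_card (by omega) k
    obtain ⟨Wm, hWmcard, hWmspan⟩ := hspan m hm
    set ρ : ι → ((J → ι) → F) := fun a v => T (Function.update v m a) with hρ
    have hSsub : ∀ x ∈ ρ '' (A : Set ι), x ∈ span F (Wm : Set ((J → ι) → F)) := by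
      rintro x ⟨a, ha, rfl⟩
      exact hWmspan a ha
    obtain ⟨b, hbS, hbspan, hbind⟩ := exists_linearIndependent F (ρ '' (A : Set ι))
    haveI : Finite (Wm : Set ((J → ι) → F)) := Wm.finite_toSet
    have hrange : Set.range ((↑) : b → ((J → ι) → F)) ≤ span F (Wm : Set ((J → ι) → F)) := by
      rw [Subtype.range_coe]
      intro x hx
      exact hSsub x (hbS hx)
    have hbfin : b.Finite := by
      have := hbind.finite_of_le_span_finite _ (Wm : Set ((J → ι) → F)) hrange
      exact Set.toFinite b
    haveI : Fintype (Wm : Set ((J → ι) → F)) := Fintype.ofFinite _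
    haveI hbfintype : Fintype b := hbfin.fintype
    have hbcard : Fintype.card b ≤ N := by
      have h1 := linearIndependent_le_span' _ hbind (Wm : Set ((J → ι) → F)) hrange
      rw [Cardinal.mk_fintype] at h1
      have h2 : (Wm : Set ((J → ι) → F)).toFinset.card = Wm.card := by simp
      calc Fintype.card b ≤ Fintype.card (Wm : Set ((J → ι) → F)) := by exact_mod_cast h1
        _ = Wm.card := by simp [Fintype.card_coe]
        _ ≤ N := hWmcard
    -- choice of preimages
    have hpre : ∀ x ∈ b, ∃ a, a ∈ A ∧ ρ a = x := by
      intro x hx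
      obtain ⟨a, ha, rfl⟩ := hbS hx
      exact ⟨a, ha, rfl⟩
    set g : ((J → ι) → F) → ι := fun x =>
      if hx : ∃ a, a ∈ A ∧ ρ a = x then hx.choose else a₀ with hg
    set B : Finset ι := hbfin.toFinset.image g with hB
    have hBcard : B.card ≤ N := by
      calc B.card ≤ hbfin.toFinset.card := Finset.card_image_le
        _ = Fintype.card b := by simp [Set.Finite.card_toFinset]
        _ ≤ N := hbcard
    have hBA : ∀ x ∈ B, x ∈ A := by
      intro x hx
      rw [hB, Finset.mem_image] at hx
      obtain ⟨y, hy, rfl⟩ := hx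
      rw [Set.Finite.mem_toFinset] at hy
      have hex := hpre y hy
      rw [hg]; simp only [dif_pos hex]
      exact hex.choose_spec.1
    have hbB : b ⊆ ρ '' (B : Set ι) := by
      intro x hx
      have hex := hpre x hx
      refine ⟨g x, ?_, ?_⟩
      · rw [hB]
        exact Finset.mem_coe.mpr (Finset.mem_image_of_mem g (hbfin.mem_toFinset.mpr hx))
      · rw [hg]; simp only [dif_pos hex]
        exact hex.choose_spec.2
    have hρspan : ∀ a ∈ A, ρ a ∈ span F (ρ '' (B : Set ι)) := by
      intro a ha
      have : ρ a ∈ span F (ρ '' (A : Set ι)) :=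
        subset_span ⟨a, ha, rfl⟩
      rw [← hbspan] at this
      exact span_mono hbB this
    set A' : Finset ι := A \ B with hA'
    -- the smaller tensor
    have hJ'card : Fintype.card {j : J // j ≠ m} = r + 1 := by
      have h1 := Fintype.card_subtype_compl (fun j : J => j = m)
      rw [Fintype.card_subtype_eq, hJ] at h1
      simpa using h1
    set k' : {j : J // j ≠ m} := ⟨k, Ne.symm hm⟩ with hk'
    set T' : ({j : J // j ≠ m} → ι) → F := fun v' => T (coreExt m k' v') with hT'
    have hA'card : A'.card ≤ r * N := by
      apply IH ι {j : J // j ≠ m} hJ'card N A' T' k'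
      · -- diagonal
        intro a ha
        have hc : coreExt m k' (fun _ => a) = fun _ => a := by
          funext j; by_cases h : j = m
          · subst h; rw [coreExt_self]
          · rw [coreExt_ne _ _ _ _ h]
        rw [hT']
        simp only [hc]
        exact hdiag a (Finset.mem_sdiff.mp ha).1
      · -- vanishing
        intro v' hv'mem hv'inj
        set w : J → ι := coreExt m k' v' with hw
        have hwm : w m = v' k' := coreExt_self m k' v'
        have hwj : ∀ (j : J) (h : j ≠ m), w j = v' ⟨j, h⟩ := fun j h => coreExt_ne m k' v' j h
        have key : ∀ x ∈ span F (ρ '' (B : Set ι)), x w = 0 := by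
          intro x hx
          induction hx using Submodule.span_induction with
          | mem x hxmem =>
            obtain ⟨bb, hbb, rfl⟩ := hxmem
            apply hvanish
            · intro j
              by_cases h : j = m
              · subst h; rw [Function.update_self]; exact hBA bb hbb
              · rw [Function.update_of_ne h, hwj j h]
                exact (Finset.mem_sdiff.mp (hv'mem ⟨j, h⟩)).1
            · intro j1 j2 heq
              by_cases h1 : j1 = m <;> by_cases h2 : j2 = m
              · rw [h1, h2]
              · exfalso
                rw [h1, Function.update_self, Function.update_of_ne h2, hwj j2 h2] at heq
                exact (Finset.mem_sdiff.mp (hv'mem ⟨j2, h2⟩)).2 (heq ▸ hbb)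
              · exfalso
                rw [h2, Function.update_self, Function.update_of_ne h1, hwj j1 h1] at heq
                exact (Finset.mem_sdiff.mp (hv'mem ⟨j1, h1⟩)).2 (heq ▸ hbb)
              · rw [Function.update_of_ne h1, Function.update_of_ne h2, hwj j1 h1, hwj j2 h2] at heq
                have := hv'inj heq
                exact congrArg Subtype.val this
          | zero => simp
          | add x y _ _ hx hy => simp [hx, hy]
          | smul c x _ hx => simp [hx]
        have ha' : v' k' ∈ A' := hv'mem k'
        have h0 : ρ (v' k') w = 0 := key _ (hρspan _ (Finset.mem_sdiff.mp ha').1)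
        rw [hρ] at h0
        simp only at h0
        rw [hT']
        have : Function.update w m (v' k') = w := by
          rw [← hwm]; exact Function.update_eq_self m w
        rw [this] at h0
        exact h0
      · -- span hypothesis
        intro j' hj'
        have hjm : (j' : J) ≠ m := j'.2
        have hjk : (j' : J) ≠ k := fun h => hj' (Subtype.ext h)
        obtain ⟨W, hWcard, hWspan⟩ := hspan j' hjk
        set Φ : ((J → ι) → F) →ₗ[F] (({j : J // j ≠ m} → ι) → F) := LinearMap.funLeft F F (coreExt m k') with hΦ
        refine ⟨W.image Φ, le_trans Finset.card_image_le hWcard, ?_⟩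
        intro a ha
        have hrow : (fun v' => T' (Function.update v' j' a)) =
            Φ (fun v => T (Function.update v (j' : J) a)) := by
          funext v'
          rw [hΦ, hT']
          simp only [LinearMap.funLeft_apply]
          congr 1
          funext jj
          by_cases h : jj = m
          · subst h
            rw [coreExt_self, Function.update_of_ne (Ne.symm hjm), coreExt_self,
              Function.update_of_ne (Ne.symm hj')]
          · rw [coreExt_ne _ _ _ _ h, Function.update_apply, Function.update_apply,
              coreExt_ne _ _ _ _ h]
            simp [Subtype.ext_iff]
        rw [hrow]
        have := Submodule.apply_mem_span_image_of_mem_span Φ (hWspan a (Finset.mem_sdiff.mp ha).1)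
        refine span_mono ?_ this
        rw [Finset.coe_image]
    calc A.card ≤ A'.card + B.card := Finset.card_le_card_sdiff_add_card
      _ ≤ r * N + N := Nat.add_le_add hA'card hBcard
      _ ≤ (r + 1) * N := by rw [Nat.add_mul, Nat.one_mul]

open MvPolynomial Finset

noncomputable section AuxStmt9

def symToFun (n d : ℕ) (σ : Sym (Fin (n + 1)) d) : Fin n → ℕ :=
  fun i => Multiset.count i.castSucc (σ : Multiset (Fin (n + 1)))

lemma symImage_card (n d : ℕ) :
    ((Finset.univ : Finset (Sym (Fin (n+1)) d)).image (symToFun n d)).card ≤ (n + d).choose d := by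
  calc ((Finset.univ : Finset (Sym (Fin (n+1)) d)).image (symToFun n d)).card
      ≤ (Finset.univ : Finset (Sym (Fin (n+1)) d)).card := Finset.card_image_le
    _ = Fintype.card (Sym (Fin (n+1)) d) := Finset.card_univ
    _ = (Fintype.card (Fin (n+1)) + d - 1).choose d := Sym.card_sym_eq_choose _
    _ = (n + d).choose d := by rw [Fintype.card_fin]; congr 1; omega

lemma mem_symImage (n d : ℕ) (mm : Fin n → ℕ) (h : ∑ i, mm i ≤ d) :
    mm ∈ (Finset.univ : Finset (Sym (Fin (n+1)) d)).image (symToFun n d) := by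
  classical
  rw [Finset.mem_image]
  have hcard : Multiset.card
      ((∑ i : Fin n, Multiset.replicate (mm i) i.castSucc)
        + Multiset.replicate (d - ∑ i, mm i) (Fin.last n)) = d := by
    rw [Multiset.card_add, Multiset.card_replicate]
    have hc : Multiset.card (∑ i : Fin n, Multiset.replicate (mm i) i.castSucc) = ∑ i, mm i := by
      induction (Finset.univ : Finset (Fin n)) using Finset.induction with
      | empty => simp
      | insert _ _ hni ih => simp [Finset.sum_insert hni, ih]
    rw [hc]; omega
  refine ⟨⟨_, hcard⟩, Finset.mem_univ _, ?_⟩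
  funext i
  show Multiset.count i.castSucc _ = mm i
  rw [Sym.coe_mk, Multiset.count_add, Multiset.count_replicate, Multiset.count_sum']
  have hterm : ∀ i' : Fin n,
      Multiset.count i.castSucc (Multiset.replicate (mm i') i'.castSucc)
        = if i' = i then mm i' else 0 := by
    intro i'; rw [Multiset.count_replicate]; simp [Fin.castSucc_inj]
  rw [Finset.sum_congr rfl (fun i' _ => hterm i'), Finset.sum_ite_eq' Finset.univ i mm]
  simp [(Fin.castSucc_lt_last i).ne']

variable {F : Type} [Field F]

def keyFn (n r : ℕ) (j : Fin r) (c : (Fin r × Fin n) →₀ ℕ) : Fin n → ℕ := fun i => c (j, i)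

def alphaFn {F : Type} [Field F] (n : ℕ) (x : Fin n → F) (mm : Fin n → ℕ) : F :=
  ∏ i, x i ^ mm i

def prodOff {F : Type} [Field F] {n r s : ℕ} (u : Fin s → Fin r → Fin n → F) (j : Fin r)
    (c : (Fin r × Fin n) →₀ ℕ) (v : Fin r → Fin s) : F :=
  ∏ p ∈ Finset.univ.filter (fun p : Fin r × Fin n => p.1 ≠ j), (u (v p.1) p.1 p.2) ^ c p

def HFn {F : Type} [Field F] {n r s : ℕ} (u : Fin s → Fin r → Fin n → F)
    (f : MvPolynomial (Fin r × Fin n) F) (j : Fin r) (mm : Fin n → ℕ) :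
    (Fin r → Fin s) → F :=
  fun v => ∑ c ∈ f.support.filter (fun c => keyFn n r j c = mm), f.coeff c * prodOff u j c v

lemma decomp {F : Type} [Field F] {n r s : ℕ} (u : Fin s → Fin r → Fin n → F)
    (f : MvPolynomial (Fin r × Fin n) F) (j : Fin r) (a : Fin s)
    (D : Finset (Fin n → ℕ)) (hD : ∀ c ∈ f.support, keyFn n r j c ∈ D) (v : Fin r → Fin s) :
    eval (fun p : Fin r × Fin n => u ((Function.update v j a) p.1) p.1 p.2) f
      = ∑ mm ∈ D, alphaFn n (u a j) mm * HFn u f j mm v := by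
  classical
  have hR : ∑ mm ∈ D, alphaFn n (u a j) mm * HFn u f j mm v
      = ∑ c ∈ f.support, alphaFn n (u a j) (keyFn n r j c) * (f.coeff c * prodOff u j c v) := by
    rw [← Finset.sum_fiberwise_of_maps_to hD
      (fun c => alphaFn n (u a j) (keyFn n r j c) * (f.coeff c * prodOff u j c v))]
    refine Finset.sum_congr rfl fun mm _ => ?_
    rw [HFn, Finset.mul_sum]
    refine Finset.sum_congr rfl fun c hc => ?_
    rw [(Finset.mem_filter.mp hc).2]
  rw [hR, eval_eq']
  refine Finset.sum_congr rfl fun c hc => ?_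
  rw [← Finset.prod_filter_mul_prod_filter_not Finset.univ (fun p : Fin r × Fin n => p.1 = j)]
  have h1 : (Finset.univ.filter (fun p : Fin r × Fin n => p.1 = j))
      = Finset.univ.image (fun i : Fin n => ((j, i) : Fin r × Fin n)) := by
    ext p
    simp only [Finset.mem_filter, Finset.mem_univ, true_and, Finset.mem_image]
    constructor
    · intro h; exact ⟨p.2, by rw [← h]⟩
    · rintro ⟨i, rfl⟩; rfl
  have hinj : ∀ (i : Fin n), i ∈ Finset.univ → ∀ (i' : Fin n), i' ∈ Finset.univ →
      ((j, i) : Fin r × Fin n) = (j, i') → i = i' := by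
    intro i _ i' _ h; exact (Prod.ext_iff.mp h).2
  rw [h1, Finset.prod_image hinj]
  have h2 : ∀ i : Fin n,
      u ((Function.update v j a) ((j, i) : Fin r × Fin n).1) ((j, i) : Fin r × Fin n).1
          ((j, i) : Fin r × Fin n).2 ^ c (j, i)
        = u a j i ^ keyFn n r j c i := by
    intro i
    show u (Function.update v j a j) j i ^ c (j, i) = _
    rw [Function.update_self]; rfl
  rw [Finset.prod_congr rfl (fun i _ => h2 i)]
  have h3 : ∏ p ∈ Finset.univ.filter (fun p : Fin r × Fin n => ¬ p.1 = j),
      (u ((Function.update v j a) p.1) p.1 p.2) ^ c p = prodOff u j c v := by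
    refine Finset.prod_congr rfl fun p hp => ?_
    rw [Function.update_of_ne (Finset.mem_filter.mp hp).2]
  rw [h3]
  show f.coeff c * (alphaFn n (u a j) (keyFn n r j c) * prodOff u j c v) = _
  ring

end AuxStmt9

/-- A strongly-algebraic r-uniform hypergraph of complexity (n,d) contains no member of
the family N_{r,s} for s > (r-1)·C(n+d,d). -/
theorem stmt_9 (F : Type) [Field F] [DecidableEq F] (n d r s : ℕ) (hr : 0 < r)
    (hs : (r - 1) * (n + d).choose d < s)
    (V : Finset (Fin n → F))
    (f : MvPolynomial (Fin r × Fin n) F) (hdeg : f.totalDegree ≤ d)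
    (E : Finset (Finset (Fin n → F)))
    (hE : ∀ e ∈ E, e.card = r ∧ e ⊆ V)
    (hdef : ∀ w : Fin r → (Fin n → F), Function.Injective w → (∀ j, w j ∈ V) →
      (Finset.image w Finset.univ ∈ E ↔
        eval (fun p : Fin r × Fin n => w p.1 p.2) f ≠ 0)) :
    ¬ ∃ u : Fin s → Fin r → (Fin n → F),
      Function.Injective (fun p : Fin s × Fin r => u p.1 p.2) ∧
      (∀ i j, u i j ∈ V) ∧
      (∀ i : Fin s, Finset.image (u i) Finset.univ ∈ E) ∧
      (∀ σ : Fin r → Fin s, Function.Injective σ →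
        Finset.image (fun j => u (σ j) j) Finset.univ ∉ E) := by
  classical
  rintro ⟨u, hinj, hmem, hedge, hnon⟩
  obtain ⟨r', rfl⟩ : ∃ r', r = r' + 1 := ⟨r - 1, by omega⟩
  set T : (Fin (r' + 1) → Fin s) → F := fun v =>
    eval (fun p : Fin (r' + 1) × Fin n => u (v p.1) p.1 p.2) f with hT
  have hdiag : ∀ a ∈ (Finset.univ : Finset (Fin s)), T (fun _ => a) ≠ 0 := by
    intro a _
    have huinj : Function.Injective (u a) := by
      intro j1 j2 h
      have h2 := hinj (a₁ := (a, j1)) (a₂ := (a, j2)) h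
      exact congrArg Prod.snd h2
    exact (hdef (u a) huinj (fun jj => hmem a jj)).mp (hedge a)
  have hvanish : ∀ v : Fin (r' + 1) → Fin s, (∀ j, v j ∈ (Finset.univ : Finset (Fin s))) →
      Function.Injective v → T v = 0 := by
    intro v _ hvinj
    have hwinj : Function.Injective (fun jj : Fin (r' + 1) => u (v jj) jj) := by
      intro j1 j2 h
      have h2 := hinj (a₁ := (v j1, j1)) (a₂ := (v j2, j2)) h
      exact congrArg Prod.snd h2
    by_contra h0
    exact hnon v hvinj ((hdef _ hwinj (fun jj => hmem _ _)).mpr h0)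
  have hspan : ∀ j : Fin (r' + 1), j ≠ 0 →
      ∃ W : Finset ((Fin (r' + 1) → Fin s) → F), W.card ≤ (n + d).choose d ∧
        ∀ a ∈ (Finset.univ : Finset (Fin s)),
          (fun v => T (Function.update v j a)) ∈
            Submodule.span F (W : Set ((Fin (r' + 1) → Fin s) → F)) := by
    intro j _
    refine ⟨((Finset.univ : Finset (Sym (Fin (n+1)) d)).image (symToFun n d)).image (HFn u f j),
      le_trans Finset.card_image_le (symImage_card n d), ?_⟩
    intro a _
    have hD : ∀ c ∈ f.support, keyFn n (r' + 1) j c ∈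
        (Finset.univ : Finset (Sym (Fin (n+1)) d)).image (symToFun n d) := by
      intro c hc
      apply mem_symImage
      have h1 : (c.sum fun _ e => e) ≤ d := le_trans (MvPolynomial.le_totalDegree hc) hdeg
      have h2 : (c.sum fun _ e => e) = ∑ p : Fin (r' + 1) × Fin n, c p :=
        Finsupp.sum_fintype _ _ (fun _ => rfl)
      have h3 : ∑ p : Fin (r' + 1) × Fin n, c p
          = ∑ jj : Fin (r' + 1), ∑ i : Fin n, c (jj, i) := Fintype.sum_prod_type _
      have h4 : ∑ i : Fin n, c (j, i) ≤ ∑ jj : Fin (r' + 1), ∑ i : Fin n, c (jj, i) :=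
        Finset.single_le_sum (f := fun jj => ∑ i : Fin n, c (jj, i))
          (fun jj _ => Nat.zero_le _) (Finset.mem_univ j)
      show ∑ i : Fin n, c (j, i) ≤ d
      omega
    have hdec : (fun v => T (Function.update v j a)) =
        ∑ mm ∈ (Finset.univ : Finset (Sym (Fin (n+1)) d)).image (symToFun n d),
          alphaFn n (u a j) mm • HFn u f j mm := by
      funext v
      rw [Finset.sum_apply]
      simp only [Pi.smul_apply, smul_eq_mul]
      exact decomp u f j a _ hD v
    rw [hdec]
    refine Submodule.sum_mem _ fun mm hmm => Submodule.smul_mem _ _ (Submodule.subset_span ?_)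
    exact Finset.mem_coe.mpr (Finset.mem_image_of_mem _ hmm)
  have hcard := core F r' (Fin s) (Fin (r' + 1)) (by simp) ((n + d).choose d)
    Finset.univ T 0 hdiag hvanish hspan
  rw [Finset.card_univ, Fintype.card_fin] at hcard
  have hs' : r' * (n + d).choose d < s := by simpa using hs
  omega
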